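/- arXiv:1702.01143 — 3 statements merged into one kernel-verified Lean document; each statement's English description precedes it below -/
import Mathlib

section
/- Let (X_{n,k})_{k∈ℤ, n≥1} be a triangular array of integrable real random variables that is row-wise stationary (for each n, the sequence (X_{n,k})_k is strictly stationary), with (X_{n,1})_{n≥1} uniformly integrable. Assume that for each fixed m ≥ 1, the random vector (X_{n,1},...,X_{n,m}) converges in distribution as n→∞ to (X_1,...,X_m), and that (1/m)∑_{u=1}^m X_u → c in L¹ as m→∞, for a constant c. Then (1/n)∑_{u=1}^n X_{n,u} → c in L¹ as n→∞. -/
open MeasureTheory Filter Topology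

-- Pointwise truncation inequality.
lemma aux_pt (m : ℕ) (hm : 1 ≤ m) (x : Fin m → ℝ) (c M' : ℝ) :
    |(m:ℝ)⁻¹ * ∑ i, x i - c| ≤ min |(m:ℝ)⁻¹ * ∑ i, x i - c| (M' + |c|)
      + (m:ℝ)⁻¹ * ∑ i, max (|x i| - M') 0 := by
  have hm0 : (0:ℝ) < (m:ℝ) := by exact_mod_cast hm
  set t := |(m:ℝ)⁻¹ * ∑ i, x i - c| with ht
  rcases le_or_gt t (M' + |c|) with h | h
  · have h0 : min t (M' + |c|) = t := min_eq_left h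
    rw [h0]
    have : 0 ≤ (m:ℝ)⁻¹ * ∑ i, max (|x i| - M') 0 := by
      apply mul_nonneg (by positivity)
      exact Finset.sum_nonneg fun i _ => le_max_right _ _
    linarith
  · rw [min_eq_right h.le]
    have h1 : t ≤ (m:ℝ)⁻¹ * ∑ i, |x i| + |c| := by
      calc t ≤ |(m:ℝ)⁻¹ * ∑ i, x i| + |c| := abs_sub _ _
        _ ≤ (m:ℝ)⁻¹ * ∑ i, |x i| + |c| := by
            gcongr
            rw [abs_mul, abs_of_nonneg (by positivity : (0:ℝ) ≤ (m:ℝ)⁻¹)]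
            gcongr
            exact Finset.abs_sum_le_sum_abs _ _
    have e : ∑ i, (|x i| - M') = (∑ i, |x i|) - (m:ℝ) * M' := by
      rw [Finset.sum_sub_distrib, Finset.sum_const, Finset.card_univ, Fintype.card_fin,
        nsmul_eq_mul]
    have h2 : (m:ℝ)⁻¹ * ∑ i, |x i| - M' ≤ (m:ℝ)⁻¹ * ∑ i, max (|x i| - M') 0 := by
      have e2 : (m:ℝ)⁻¹ * ∑ i, (|x i| - M') = (m:ℝ)⁻¹ * ∑ i, |x i| - M' := by
        rw [e]; field_simp
      rw [← e2]
      exact mul_le_mul_of_nonneg_left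
        (Finset.sum_le_sum fun i _ => le_max_left _ _) (by positivity)
    linarith

-- Splitting a sum over `range (m*q)` into `q` blocks of length `m`.
lemma sum_range_mul' {β : Type*} [AddCommMonoid β] (f : ℕ → β) (m q : ℕ) :
    ∑ u ∈ Finset.range (m*q), f u
      = ∑ j ∈ Finset.range q, ∑ i ∈ Finset.range m, f (m*j + i) := by
  induction q with
  | zero => simp
  | succ q ih => rw [Nat.mul_succ, Finset.sum_range_add, ih, Finset.sum_range_succ]

-- Stationarity transfer for integrals of measurable functionals of blocks.
lemma stat_integral {Ω : Type*} [MeasurableSpace Ω] (μ : Measure Ω)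
    (X : ℕ → ℤ → Ω → ℝ) (hmeas : ∀ n k, Measurable (X n k))
    (hstat : ∀ n (k : ℤ) (m : ℕ),
      Measure.map (fun ω => fun i : Fin m => X n (k + (i : ℕ)) ω) μ
        = Measure.map (fun ω => fun i : Fin m => X n (1 + (i : ℕ)) ω) μ)
    (n : ℕ) (k : ℤ) (m : ℕ) (g : (Fin m → ℝ) → ℝ) (hg : Measurable g) :
    ∫ ω, g (fun i : Fin m => X n (k + (i : ℕ)) ω) ∂μ
      = ∫ ω, g (fun i : Fin m => X n (1 + (i : ℕ)) ω) ∂μ := by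
  have h1 : Measurable fun ω => fun i : Fin m => X n (k + (i : ℕ)) ω :=
    measurable_pi_lambda _ fun i => hmeas n _
  have h2 : Measurable fun ω => fun i : Fin m => X n (1 + (i : ℕ)) ω :=
    measurable_pi_lambda _ fun i => hmeas n _
  rw [← integral_map h1.aemeasurable hg.stronglyMeasurable.aestronglyMeasurable,
      ← integral_map h2.aemeasurable hg.stronglyMeasurable.aestronglyMeasurable,
      hstat n k m]

-- Single-coordinate stationarity.
lemma stat_single {Ω : Type*} [MeasurableSpace Ω] (μ : Measure Ω)
    (X : ℕ → ℤ → Ω → ℝ) (hmeas : ∀ n k, Measurable (X n k))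
    (hstat : ∀ n (k : ℤ) (m : ℕ),
      Measure.map (fun ω => fun i : Fin m => X n (k + (i : ℕ)) ω) μ
        = Measure.map (fun ω => fun i : Fin m => X n (1 + (i : ℕ)) ω) μ)
    (n : ℕ) (k : ℤ) (g : ℝ → ℝ) (hg : Measurable g) :
    ∫ ω, g (X n k ω) ∂μ = ∫ ω, g (X n 1 ω) ∂μ := by
  have := stat_integral μ X hmeas hstat n k 1 (fun x => g (x 0))
    (hg.comp (measurable_pi_apply 0))
  simpa using this

-- tail truncation bound
lemma tail_bound {Ω : Type*} [MeasurableSpace Ω] (μ : Measure Ω) [IsFiniteMeasure μ]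
    (f : Ω → ℝ) (hm : Measurable f) (hi : Integrable f μ) (M : ℝ) (hM : 0 ≤ M) :
    ∫ ω, max (|f ω| - M) 0 ∂μ ≤ ∫ ω in {ω | M < |f ω|}, |f ω| ∂μ := by
  have hs : MeasurableSet {ω | M < |f ω|} := measurableSet_lt measurable_const hm.abs
  have hpt : ∀ ω, max (|f ω| - M) 0 ≤ {ω | M < |f ω|}.indicator (fun ω => |f ω|) ω := by
    intro ω
    simp only [Set.indicator_apply, Set.mem_setOf_eq]
    split_ifs with h
    · exact max_le (by linarith) (abs_nonneg _)
    · push_neg at h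
      exact max_le (by linarith) le_rfl
  calc ∫ ω, max (|f ω| - M) 0 ∂μ
      ≤ ∫ ω, {ω | M < |f ω|}.indicator (fun ω => |f ω|) ω ∂μ := by
        refine integral_mono ((hi.abs.sub (integrable_const M)).sup (integrable_const 0))
          (hi.abs.indicator hs) hpt
    _ = ∫ ω in {ω | M < |f ω|}, |f ω| ∂μ := integral_indicator hs

set_option maxHeartbeats 2000000 in
/-- Lemma (triangular-array L¹ law of large numbers, Peligrad–Zhang Lemma 1):
for a row-wise strictly stationary, uniformly integrable triangular array whose
finite-dimensional distributions converge to those of a limiting sequence whose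
Cesàro averages converge to `c` in `L¹`, the row averages converge to `c` in `L¹`. -/
theorem triangular_array_L1_lln
    {Ω : Type*} [MeasurableSpace Ω] (μ : Measure Ω) [IsProbabilityMeasure μ]
    (X : ℕ → ℤ → Ω → ℝ) (Xlim : ℕ → Ω → ℝ) (c : ℝ)
    (hmeas : ∀ n k, Measurable (X n k))
    (hmeaslim : ∀ u, Measurable (Xlim u))
    (hint : ∀ n k, Integrable (X n k) μ)
    (hintlim : ∀ u, Integrable (Xlim u) μ)
    -- row-wise strict stationarity
    (hstat : ∀ n (k : ℤ) (m : ℕ),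
      Measure.map (fun ω => fun i : Fin m => X n (k + (i : ℕ)) ω) μ
        = Measure.map (fun ω => fun i : Fin m => X n (1 + (i : ℕ)) ω) μ)
    -- uniform integrability of (X_{n,1})_n
    (hui : ∀ ε > (0 : ℝ), ∃ M : ℝ, ∀ n : ℕ,
      ∫ ω in {ω | M < |X n 1 ω|}, |X n 1 ω| ∂μ ≤ ε)
    -- convergence in distribution of (X_{n,1},...,X_{n,m}) to (X_1,...,X_m)
    (hconv : ∀ m : ℕ, ∀ f : BoundedContinuousFunction (Fin m → ℝ) ℝ,
      Tendsto (fun n : ℕ => ∫ ω, f (fun i : Fin m => X n (1 + (i : ℕ)) ω) ∂μ) atTop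
        (𝓝 (∫ ω, f (fun i : Fin m => Xlim ((i : ℕ) + 1) ω) ∂μ)))
    -- L¹ convergence of the Cesàro averages of the limit sequence to c
    (hL1 : Tendsto
      (fun m : ℕ => ∫ ω, |(m : ℝ)⁻¹ * ∑ u ∈ Finset.range m, Xlim (u + 1) ω - c| ∂μ)
      atTop (𝓝 0)) :
    Tendsto
      (fun n : ℕ => ∫ ω, |(n : ℝ)⁻¹ * ∑ u ∈ Finset.range n, X n ((u : ℤ) + 1) ω - c| ∂μ)
      atTop (𝓝 0) := by
  rw [NormedAddCommGroup.tendsto_nhds_zero]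
  intro ε hε
  have hε5 : 0 < ε/5 := by linarith
  -- integrability of the truncated tails
  have tailint : ∀ n (k : ℤ) (M : ℝ),
      Integrable (fun ω => max (|X n k ω| - M) 0) μ := fun n k M =>
    ((hint n k).abs.sub (integrable_const M)).sup (integrable_const 0)
  -- uniform tail control at level ε/5
  have hui' : ∀ δ > (0:ℝ), ∃ M ≥ (0:ℝ), ∀ n, ∫ ω, max (|X n 1 ω| - M) 0 ∂μ ≤ δ := by
    intro δ hδ
    obtain ⟨M₁, hM₁⟩ := hui δ hδ
    refine ⟨max M₁ 0, le_max_right _ _, fun n => ?_⟩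
    refine (tail_bound μ (X n 1) (hmeas n 1) (hint n 1) _ (le_max_right _ _)).trans ?_
    refine le_trans (setIntegral_mono_set (hint n 1).abs.integrableOn
      (Filter.Eventually.of_forall fun ω => abs_nonneg _) ?_) (hM₁ n)
    refine HasSubset.Subset.eventuallyLE fun ω hω => ?_
    simp only [Set.mem_setOf_eq] at hω ⊢
    exact lt_of_le_of_lt (le_max_left _ _) hω
  obtain ⟨M₀, hM₀, htail⟩ := hui' (ε/5) hε5
  obtain ⟨M₂, hM₂, htail2⟩ := hui' 1 one_pos
  -- a uniform bound on E|X n 1|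
  set K : ℝ := M₂ + 1 with hKdef
  have hK0 : 0 ≤ K := by positivity
  have hK : ∀ n, ∫ ω, |X n 1 ω| ∂μ ≤ K := by
    intro n
    have hpt : ∀ ω, |X n 1 ω| ≤ max (|X n 1 ω| - M₂) 0 + M₂ := by
      intro ω; have := le_max_left (|X n 1 ω| - M₂) (0:ℝ); linarith
    calc ∫ ω, |X n 1 ω| ∂μ
        ≤ ∫ ω, (max (|X n 1 ω| - M₂) 0 + M₂) ∂μ :=
          integral_mono (hint n 1).abs ((tailint n 1 M₂).add (integrable_const M₂)) hpt
      _ = (∫ ω, max (|X n 1 ω| - M₂) 0 ∂μ) + M₂ := by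
          rw [integral_add (tailint n 1 M₂) (integrable_const M₂), integral_const]
          simp
      _ ≤ 1 + M₂ := by linarith [htail2 n]
      _ = K := by rw [hKdef]; ring
  -- choose m
  obtain ⟨m, hbm, hm1⟩ :=
    ((hL1.eventually (gt_mem_nhds hε5)).and (eventually_ge_atTop 1)).exists
  have hm0 : (0:ℝ) < (m:ℝ) := by exact_mod_cast hm1
  -- the truncated bounded continuous functional
  set M : ℝ := M₀ + |c| with hMdef
  have hMnn : 0 ≤ M := by positivity
  have hφcont : Continuous fun x : Fin m → ℝ => min |(m:ℝ)⁻¹ * ∑ i, x i - c| M :=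
    (((continuous_const.mul (continuous_finset_sum _ fun i _ =>
      continuous_apply i)).sub continuous_const).abs).min continuous_const
  have hφbd : ∀ x : Fin m → ℝ, ‖min |(m:ℝ)⁻¹ * ∑ i, x i - c| M‖ ≤ M := by
    intro x
    rw [Real.norm_eq_abs, abs_of_nonneg (le_min (abs_nonneg _) hMnn)]
    exact min_le_right _ _
  set f : BoundedContinuousFunction (Fin m → ℝ) ℝ :=
    BoundedContinuousFunction.ofNormedAddCommGroup _ hφcont M hφbd with hfdef
  have hfapp : ∀ x : Fin m → ℝ, f x = min |(m:ℝ)⁻¹ * ∑ i, x i - c| M := fun x => rfl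
  -- the integral of f against the limit law is at most b m
  have hflim_le : ∫ ω, f (fun i : Fin m => Xlim ((i:ℕ)+1) ω) ∂μ
      ≤ ∫ ω, |(m:ℝ)⁻¹ * ∑ u ∈ Finset.range m, Xlim (u+1) ω - c| ∂μ := by
    refine integral_mono
      (((((integrable_finset_sum _ fun i _ => hintlim _).const_mul _).sub
        (integrable_const c)).abs).inf (integrable_const M))
      ((((integrable_finset_sum _ fun u _ => hintlim (u+1)).const_mul _).sub
        (integrable_const c)).abs) ?_
    intro ω
    simp only [hfapp]
    refine le_trans (min_le_left _ _) (le_of_eq ?_)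
    rw [Fin.sum_univ_eq_sum_range (fun u => Xlim (u+1) ω) m]
  have hev1 : ∀ᶠ n in atTop,
      ∫ ω, f (fun i : Fin m => X n (1 + (i:ℕ)) ω) ∂μ < ε/5 :=
    (hconv m f).eventually (gt_mem_nhds (lt_of_le_of_lt hflim_le hbm))
  -- the row m-average L¹ distance
  set a : ℕ → ℝ := fun n =>
    ∫ ω, |(m:ℝ)⁻¹ * ∑ i : Fin m, X n (1 + (i:ℕ)) ω - c| ∂μ with hadef
  have ha_nonneg : ∀ n, 0 ≤ a n := fun n => integral_nonneg fun ω => abs_nonneg _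
  have ha_le : ∀ n, a n ≤ (∫ ω, f (fun i : Fin m => X n (1+(i:ℕ)) ω) ∂μ) + ε/5 := by
    intro n
    have hptw : ∀ ω, |(m:ℝ)⁻¹ * ∑ i : Fin m, X n (1+(i:ℕ)) ω - c|
        ≤ f (fun i : Fin m => X n (1+(i:ℕ)) ω)
          + (m:ℝ)⁻¹ * ∑ i : Fin m, max (|X n (1+(i:ℕ)) ω| - M₀) 0 := by
      intro ω
      have := aux_pt m hm1 (fun i : Fin m => X n (1+(i:ℕ)) ω) c M₀
      rw [hfapp]; exact this
    have hi1 : Integrable (fun ω => f (fun i : Fin m => X n (1+(i:ℕ)) ω)) μ :=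
      ((((integrable_finset_sum _ fun i _ => hint n _).const_mul _).sub
        (integrable_const c)).abs).inf (integrable_const M)
    have hi2 : Integrable
        (fun ω => (m:ℝ)⁻¹ * ∑ i : Fin m, max (|X n (1+(i:ℕ)) ω| - M₀) 0) μ :=
      (integrable_finset_sum _ fun i _ => tailint n _ M₀).const_mul _
    calc a n ≤ ∫ ω, (f (fun i : Fin m => X n (1+(i:ℕ)) ω)
          + (m:ℝ)⁻¹ * ∑ i : Fin m, max (|X n (1+(i:ℕ)) ω| - M₀) 0) ∂μ := by
          refine integral_mono ?_ (hi1.add hi2) hptw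
          exact ((((integrable_finset_sum _ fun i _ => hint n _).const_mul _).sub
            (integrable_const c)).abs)
      _ = (∫ ω, f (fun i : Fin m => X n (1+(i:ℕ)) ω) ∂μ)
          + (m:ℝ)⁻¹ * ∑ i : Fin m, ∫ ω, max (|X n (1+(i:ℕ)) ω| - M₀) 0 ∂μ := by
          rw [integral_add hi1 hi2, integral_const_mul _ _,
            integral_finset_sum _ fun i _ => tailint n _ M₀]
      _ = (∫ ω, f (fun i : Fin m => X n (1+(i:ℕ)) ω) ∂μ)
          + (m:ℝ)⁻¹ * ∑ _i : Fin m, ∫ ω, max (|X n 1 ω| - M₀) 0 ∂μ := by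
          congr 2
          refine Finset.sum_congr rfl fun i _ => ?_
          exact stat_single μ X hmeas hstat n (1+(i:ℕ))
            (fun t => max (|t| - M₀) 0)
            (((measurable_id.abs).sub measurable_const).max measurable_const)
      _ ≤ (∫ ω, f (fun i : Fin m => X n (1+(i:ℕ)) ω) ∂μ) + ε/5 := by
          rw [Finset.sum_const, Finset.card_univ, Fintype.card_fin, nsmul_eq_mul]
          have h := htail n
          have : (m:ℝ)⁻¹ * ((m:ℝ) * ∫ ω, max (|X n 1 ω| - M₀) 0 ∂μ)
              = ∫ ω, max (|X n 1 ω| - M₀) 0 ∂μ := by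
            field_simp
          rw [this]
          linarith
  -- relating block L¹ distance to a n
  have haint : ∀ n, ∫ ω, |(∑ i : Fin m, X n (1+(i:ℕ)) ω) - (m:ℝ)*c| ∂μ = m * a n := by
    intro n
    have hpt : ∀ ω, |(m:ℝ)⁻¹ * ∑ i : Fin m, X n (1+(i:ℕ)) ω - c|
        = (m:ℝ)⁻¹ * |(∑ i : Fin m, X n (1+(i:ℕ)) ω) - (m:ℝ)*c| := by
      intro ω
      have he : (m:ℝ)⁻¹ * ∑ i : Fin m, X n (1+(i:ℕ)) ω - c
          = (m:ℝ)⁻¹ * ((∑ i : Fin m, X n (1+(i:ℕ)) ω) - (m:ℝ)*c) := by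
        field_simp
      rw [he, abs_mul, abs_of_nonneg (by positivity : (0:ℝ) ≤ (m:ℝ)⁻¹)]
    have : a n = (m:ℝ)⁻¹ * ∫ ω, |(∑ i : Fin m, X n (1+(i:ℕ)) ω) - (m:ℝ)*c| ∂μ := by
      rw [hadef]
      simp only [hpt]
      rw [integral_const_mul _ _]
    rw [this]
    field_simp
  -- eventual smallness of the boundary term
  set D : ℝ := (m:ℝ) * (K + |c|) with hDdef
  have hev2 : ∀ᶠ n : ℕ in atTop, D / (n:ℝ) < ε/5 :=
    (Tendsto.div_atTop tendsto_const_nhds tendsto_natCast_atTop_atTop).eventually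
      (gt_mem_nhds hε5)
  -- the blocking bound
  have hblock : ∀ n : ℕ, 1 ≤ n →
      (∫ ω, |(n:ℝ)⁻¹ * ∑ u ∈ Finset.range n, X n ((u:ℤ)+1) ω - c| ∂μ)
        ≤ a n + D / (n:ℝ) := by
    intro n hn
    have hn0 : (0:ℝ) < (n:ℝ) := by exact_mod_cast hn
    set q := n / m with hq
    set r := n % m with hr
    have hqr : m * q + r = n := Nat.div_add_mod n m
    have hrm : r < m := Nat.mod_lt n (by omega)
    have hcast : (n:ℝ) = (m:ℝ)*(q:ℝ) + (r:ℝ) := by exact_mod_cast hqr.symm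
    -- pointwise bound
    have hptw : ∀ ω, |(n:ℝ)⁻¹ * ∑ u ∈ Finset.range n, X n ((u:ℤ)+1) ω - c|
        ≤ (n:ℝ)⁻¹ * ((∑ j ∈ Finset.range q,
              |(∑ i ∈ Finset.range m, X n (((m*j+i : ℕ):ℤ)+1) ω) - (m:ℝ)*c|)
           + ((∑ i ∈ Finset.range r, |X n (((m*q+i : ℕ):ℤ)+1) ω|) + (r:ℝ)*|c|)) := by
      intro ω
      have hsplit : ∑ u ∈ Finset.range n, X n ((u:ℤ)+1) ω
          = (∑ j ∈ Finset.range q, ∑ i ∈ Finset.range m, X n (((m*j+i:ℕ):ℤ)+1) ω)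
            + ∑ i ∈ Finset.range r, X n (((m*q+i:ℕ):ℤ)+1) ω := by
        rw [show Finset.range n = Finset.range (m*q + r) from by rw [hqr],
          Finset.sum_range_add, sum_range_mul' (fun u : ℕ => X n ((u:ℤ)+1) ω) m q]
      have habs : (n:ℝ)⁻¹ * ∑ u ∈ Finset.range n, X n ((u:ℤ)+1) ω - c
          = (n:ℝ)⁻¹ * ((∑ j ∈ Finset.range q,
              ((∑ i ∈ Finset.range m, X n (((m*j+i:ℕ):ℤ)+1) ω) - (m:ℝ)*c))
              + ((∑ i ∈ Finset.range r, X n (((m*q+i:ℕ):ℤ)+1) ω) - (r:ℝ)*c)) := by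
        rw [hsplit, Finset.sum_sub_distrib, Finset.sum_const, Finset.card_range,
          nsmul_eq_mul]
        have hne : (n:ℝ) ≠ 0 := hn0.ne'
        field_simp
        linear_combination (-c) * hcast
      rw [habs, abs_mul, abs_of_nonneg (by positivity : (0:ℝ) ≤ (n:ℝ)⁻¹)]
      refine mul_le_mul_of_nonneg_left ?_ (by positivity)
      refine le_trans (abs_add_le _ _) ?_
      gcongr
      · exact Finset.abs_sum_le_sum_abs _ _
      · refine le_trans (abs_sub _ _) ?_
        gcongr
        · exact Finset.abs_sum_le_sum_abs _ _
        · rw [abs_mul, abs_of_nonneg (by positivity : (0:ℝ) ≤ (r:ℝ))]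
    -- integrabilities
    have hiL : Integrable
        (fun ω => |(n:ℝ)⁻¹ * ∑ u ∈ Finset.range n, X n ((u:ℤ)+1) ω - c|) μ :=
      ((((integrable_finset_sum _ fun u _ => hint n _).const_mul _).sub
        (integrable_const c)).abs)
    have hiB : ∀ j, Integrable
        (fun ω => |(∑ i ∈ Finset.range m, X n (((m*j+i:ℕ):ℤ)+1) ω) - (m:ℝ)*c|) μ :=
      fun j => (((integrable_finset_sum _ fun i _ => hint n _).sub
        (integrable_const _)).abs)
    have hiR : Integrable
        (fun ω => (∑ i ∈ Finset.range r, |X n (((m*q+i:ℕ):ℤ)+1) ω|) + (r:ℝ)*|c|) μ :=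
      (integrable_finset_sum _ fun i _ => (hint n _).abs).add (integrable_const _)
    have hiS : Integrable
        (fun ω => ∑ j ∈ Finset.range q,
          |(∑ i ∈ Finset.range m, X n (((m*j+i:ℕ):ℤ)+1) ω) - (m:ℝ)*c|) μ :=
      integrable_finset_sum _ fun j _ => hiB j
    -- block identity via stationarity
    have hblockj : ∀ j, ∫ ω,
        |(∑ i ∈ Finset.range m, X n (((m*j+i:ℕ):ℤ)+1) ω) - (m:ℝ)*c| ∂μ
        = m * a n := by
      intro j
      have hg : Measurable fun x : Fin m → ℝ => |(∑ i, x i) - (m:ℝ)*c| :=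
        (((continuous_finset_sum _ fun i _ => continuous_apply i).sub
          continuous_const).abs).measurable
      have h1 := stat_integral μ X hmeas hstat n ((m*j+1 : ℕ):ℤ) m
        (fun x : Fin m → ℝ => |(∑ i, x i) - (m:ℝ)*c|) hg
      have e1 : ∀ ω, |(∑ i : Fin m, X n (((m*j+1:ℕ):ℤ) + (i:ℕ)) ω) - (m:ℝ)*c|
          = |(∑ i ∈ Finset.range m, X n (((m*j+i:ℕ):ℤ)+1) ω) - (m:ℝ)*c| := by
        intro ω
        congr 1
        rw [Fin.sum_univ_eq_sum_range (fun i : ℕ => X n (((m*j+1:ℕ):ℤ) + (i:ℕ)) ω) m]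
        congr 1
        refine Finset.sum_congr rfl fun i _ => ?_
        congr 1
        push_cast
        ring
      calc ∫ ω, |(∑ i ∈ Finset.range m, X n (((m*j+i:ℕ):ℤ)+1) ω) - (m:ℝ)*c| ∂μ
          = ∫ ω, |(∑ i : Fin m, X n (((m*j+1:ℕ):ℤ) + (i:ℕ)) ω) - (m:ℝ)*c| ∂μ := by
            simp only [e1]
        _ = ∫ ω, |(∑ i : Fin m, X n (1 + (i:ℕ)) ω) - (m:ℝ)*c| ∂μ := h1
        _ = m * a n := haint n
    -- remainder coordinates
    have hremi : ∀ i, ∫ ω, |X n (((m*q+i:ℕ):ℤ)+1) ω| ∂μ = ∫ ω, |X n 1 ω| ∂μ :=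
      fun i => stat_single μ X hmeas hstat n _ (fun t => |t|) measurable_id.abs
    -- main computation
    calc ∫ ω, |(n:ℝ)⁻¹ * ∑ u ∈ Finset.range n, X n ((u:ℤ)+1) ω - c| ∂μ
        ≤ ∫ ω, (n:ℝ)⁻¹ * ((∑ j ∈ Finset.range q,
              |(∑ i ∈ Finset.range m, X n (((m*j+i:ℕ):ℤ)+1) ω) - (m:ℝ)*c|)
           + ((∑ i ∈ Finset.range r, |X n (((m*q+i:ℕ):ℤ)+1) ω|) + (r:ℝ)*|c|)) ∂μ :=
          integral_mono hiL ((hiS.add hiR).const_mul _) hptw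
      _ = (n:ℝ)⁻¹ * ((q:ℝ) * ((m:ℝ) * a n)
            + (((r:ℝ) * ∫ ω, |X n 1 ω| ∂μ) + (r:ℝ)*|c|)) := by
          rw [integral_const_mul _ _, integral_add hiS hiR,
            integral_finset_sum _ fun j _ => hiB j,
            integral_add (integrable_finset_sum _ fun i _ => (hint n _).abs)
              (integrable_const _),
            integral_finset_sum _ fun i _ => (hint n _).abs, integral_const]
          simp only [probReal_univ, measure_univ, ENNReal.toReal_one, one_smul]
          simp only [hblockj, hremi, Finset.sum_const, Finset.card_range, nsmul_eq_mul]
      _ ≤ a n + D / (n:ℝ) := by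
          have hqm : (q:ℝ) * (m:ℝ) ≤ (n:ℝ) := by
            have : m * q ≤ n := by omega
            calc (q:ℝ) * (m:ℝ) = ((m*q : ℕ) : ℝ) := by push_cast; ring
              _ ≤ (n:ℝ) := by exact_mod_cast this
          have h1 : (n:ℝ)⁻¹ * ((q:ℝ) * ((m:ℝ) * a n)) ≤ a n := by
            calc (n:ℝ)⁻¹ * ((q:ℝ) * ((m:ℝ) * a n)) = ((q:ℝ)*(m:ℝ)/(n:ℝ)) * a n := by ring
              _ ≤ 1 * a n :=
                mul_le_mul_of_nonneg_right ((div_le_one hn0).2 hqm) (ha_nonneg n)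
              _ = a n := one_mul _
          have hrK : (r:ℝ) * (∫ ω, |X n 1 ω| ∂μ) + (r:ℝ)*|c| ≤ D := by
            rw [hDdef]
            have hr : (r:ℝ) ≤ (m:ℝ) := by exact_mod_cast hrm.le
            have hInn : (0:ℝ) ≤ ∫ ω, |X n 1 ω| ∂μ :=
              integral_nonneg fun ω => abs_nonneg _
            nlinarith [hK n, abs_nonneg c]
          have h2 : (n:ℝ)⁻¹ * ((r:ℝ) * (∫ ω, |X n 1 ω| ∂μ) + (r:ℝ)*|c|) ≤ D / (n:ℝ) := by
            rw [div_eq_inv_mul]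
            exact mul_le_mul_of_nonneg_left hrK (by positivity)
          calc (n:ℝ)⁻¹ * ((q:ℝ) * ((m:ℝ) * a n)
                + (((r:ℝ) * ∫ ω, |X n 1 ω| ∂μ) + (r:ℝ)*|c|))
              = (n:ℝ)⁻¹ * ((q:ℝ) * ((m:ℝ) * a n))
                + (n:ℝ)⁻¹ * (((r:ℝ) * ∫ ω, |X n 1 ω| ∂μ) + (r:ℝ)*|c|) := by ring
            _ ≤ a n + D / (n:ℝ) := add_le_add h1 h2
  -- final assembly
  filter_upwards [hev1, hev2, eventually_ge_atTop 1] with n h1 h2 h3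
  have hF := hblock n h3
  have hA := ha_le n
  rw [Real.norm_eq_abs, abs_of_nonneg (integral_nonneg fun ω => abs_nonneg _)]
  linarith
end

section
/- Let X, Y, Z be integrable real random variables such that (X,Y) is independent of Z, and let g be measurable with g(Z,Y) integrable. Then E(g(Z,Y) | σ(X,Y)) = E(g(Z,Y) | σ(Y)) almost surely. -/
open MeasureTheory ProbabilityTheory

/-- If `(X,Y)` is independent of `Z` and `g(Z,Y)` is integrable, then
`E(g(Z,Y) | σ(X,Y)) = E(g(Z,Y) | σ(Y))` almost surely. -/
theorem condexp_pair_indep_other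
    {Ω : Type*} {m0 : MeasurableSpace Ω} (μ : Measure Ω) [IsProbabilityMeasure μ]
    (X Y Z : Ω → ℝ) (g : ℝ × ℝ → ℝ)
    (hX : Measurable X) (hY : Measurable Y) (hZ : Measurable Z)
    (hg : Measurable g)
    (hXint : Integrable X μ) (hYint : Integrable Y μ) (hZint : Integrable Z μ)
    (hindep : IndepFun (fun ω => (X ω, Y ω)) Z μ)
    (hgint : Integrable (fun ω => g (Z ω, Y ω)) μ) :
    μ[(fun ω => g (Z ω, Y ω)) |
        MeasurableSpace.comap (fun ω => (X ω, Y ω)) inferInstance]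
      =ᵐ[μ] μ[(fun ω => g (Z ω, Y ω)) | MeasurableSpace.comap Y inferInstance] := by
  set W : Ω → ℝ × ℝ := fun ω => (X ω, Y ω) with hWdef
  have hWmeas : Measurable W := hX.prodMk hY
  set ν : Measure ℝ := μ.map Z with hνdef
  haveI : IsProbabilityMeasure ν := Measure.isProbabilityMeasure_map hZ.aemeasurable
  haveI : IsProbabilityMeasure (μ.map W) := Measure.isProbabilityMeasure_map hWmeas.aemeasurable
  set h : ℝ → ℝ := fun y => ∫ z, g (z, y) ∂ν with hhdef
  have hhsm : StronglyMeasurable h := hg.stronglyMeasurable.integral_prod_left'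
  -- law of (W, Z) is product
  have hmap : μ.map (fun ω => (W ω, Z ω)) = (μ.map W).prod ν :=
    (indepFun_iff_map_prod_eq_prod_map_map hWmeas.aemeasurable hZ.aemeasurable).mp hindep
  have hpairmeas : Measurable (fun ω => (W ω, Z ω)) := hWmeas.prodMk hZ
  set F : (ℝ × ℝ) × ℝ → ℝ := fun p => g (p.2, p.1.2) with hFdef
  have hFmeas : Measurable F := hg.comp (measurable_snd.prodMk (measurable_fst.snd))
  have hcomp : (fun ω => g (Z ω, Y ω)) = fun ω => F (W ω, Z ω) := rfl
  have hFint : Integrable F ((μ.map W).prod ν) := by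
    rw [← hmap]
    rw [integrable_map_measure hFmeas.aestronglyMeasurable hpairmeas.aemeasurable]
    exact hgint
  -- integrability of h ∘ Y
  have hGint : Integrable (fun w : ℝ × ℝ => h w.2) (μ.map W) := hFint.integral_prod_left
  have hhYint : Integrable (fun ω => h (Y ω)) μ := by
    have := (integrable_map_measure (hhsm.measurable.comp measurable_snd).aestronglyMeasurable
      hWmeas.aemeasurable).mp hGint
    exact this
  have hmW : MeasurableSpace.comap W inferInstance ≤ m0 := hWmeas.comap_le
  have hmY : MeasurableSpace.comap Y inferInstance ≤ m0 := hY.comap_le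
  have hYW : MeasurableSpace.comap Y inferInstance ≤ MeasurableSpace.comap W inferInstance := by
    have : Y = Prod.snd ∘ W := rfl
    rw [this, ← MeasurableSpace.comap_comp]
    exact MeasurableSpace.comap_mono measurable_snd.comap_le
  haveI : SigmaFinite (μ.trim hmW) := by
    have : IsFiniteMeasure (μ.trim hmW) := isFiniteMeasure_trim hmW
    infer_instance
  -- Claim: E[g(Z,Y) | σ(W)] = h ∘ Y
  have hsnd : Measurable (fun w : ℝ × ℝ => h w.2) := hhsm.measurable.comp measurable_snd
  have hkey : ∀ s : Set Ω, MeasurableSet[MeasurableSpace.comap W inferInstance] s →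
      ∫ x in s, h (Y x) ∂μ = ∫ x in s, g (Z x, Y x) ∂μ := by
    rintro _ ⟨A, hA, rfl⟩
    have hpre : W ⁻¹' A = (fun ω => (W ω, Z ω)) ⁻¹' (A ×ˢ Set.univ) := by
      ext ω; simp
    have h1 : ∫ x in W ⁻¹' A, g (Z x, Y x) ∂μ
        = ∫ p in A ×ˢ Set.univ, F p ∂((μ.map W).prod ν) := by
      rw [← hmap, hpre]
      exact (setIntegral_map (hA.prod MeasurableSet.univ)
        hFmeas.aestronglyMeasurable hpairmeas.aemeasurable).symm
    have h2 : ∫ p in A ×ˢ Set.univ, F p ∂((μ.map W).prod ν)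
        = ∫ w in A, h w.2 ∂(μ.map W) := by
      rw [setIntegral_prod _ (hFint.integrableOn)]
      simp [hhdef, hFdef]
    have h3 : ∫ x in W ⁻¹' A, h (Y x) ∂μ = ∫ w in A, h w.2 ∂(μ.map W) :=
      (setIntegral_map hA hsnd.aestronglyMeasurable hWmeas.aemeasurable).symm
    rw [h1, h2, h3]
  have hYmeas' : Measurable[MeasurableSpace.comap Y inferInstance] Y :=
    Measurable.of_comap_le le_rfl
  have hhYsm : StronglyMeasurable[MeasurableSpace.comap Y inferInstance] (fun ω => h (Y ω)) :=
    (hhsm.measurable.comp hYmeas').stronglyMeasurable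
  have claim1 : (fun ω => h (Y ω)) =ᵐ[μ]
      μ[(fun ω => g (Z ω, Y ω)) | MeasurableSpace.comap W inferInstance] := by
    refine ae_eq_condExp_of_forall_setIntegral_eq hmW hgint
      (fun s _ _ => hhYint.integrableOn) (fun s hs _ => hkey s hs) ?_
    exact StronglyMeasurable.aestronglyMeasurable (hhYsm.mono hYW)
  calc μ[(fun ω => g (Z ω, Y ω)) | MeasurableSpace.comap W inferInstance]
      =ᵐ[μ] (fun ω => h (Y ω)) := claim1.symm
    _ =ᵐ[μ] μ[(fun ω => h (Y ω)) | MeasurableSpace.comap Y inferInstance] := by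
        rw [condExp_of_stronglyMeasurable hmY hhYsm hhYint]
    _ =ᵐ[μ] μ[μ[(fun ω => g (Z ω, Y ω)) | MeasurableSpace.comap W inferInstance] |
          MeasurableSpace.comap Y inferInstance] := condExp_congr_ae claim1
    _ =ᵐ[μ] μ[(fun ω => g (Z ω, Y ω)) | MeasurableSpace.comap Y inferInstance] :=
        condExp_condExp_of_le hYW hmW
end

section
/- Let (ξ_{n,m})_{n,m∈ℤ} be a random field such that the columns η_m = (ξ_{n,m})_{n∈ℤ} are independent, and let F_{n,m} = σ(ξ_{i,j} : i ≤ n, j ≤ m). Then for any integrable random variable X and any indices, E(E(X | F_{a,b}) | F_{u,v}) = E(X | F_{min(a,u), min(b,v)}) almost surely; i.e., the filtration (F_{n,m}) is commuting. -/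
open MeasureTheory ProbabilityTheory


open Set Filter
open scoped NNReal
set_option linter.unusedSectionVars false
set_option linter.unusedVariables false

section Helpers

variable {Ω : Type*}

lemma sup_eq_generateFrom_inter (𝒜 𝒞 : MeasurableSpace Ω) :
    𝒜 ⊔ 𝒞 = MeasurableSpace.generateFrom
      {u : Set Ω | ∃ A C, MeasurableSet[𝒜] A ∧ MeasurableSet[𝒞] C ∧ u = A ∩ C} := by
  apply le_antisymm
  · refine sup_le ?_ ?_
    · intro A hA
      exact MeasurableSpace.measurableSet_generateFrom
        ⟨A, Set.univ, hA, MeasurableSet.univ, (Set.inter_univ A).symm⟩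
    · intro C hC
      exact MeasurableSpace.measurableSet_generateFrom
        ⟨Set.univ, C, MeasurableSet.univ, hC, (Set.univ_inter C).symm⟩
  · refine MeasurableSpace.generateFrom_le ?_
    rintro u ⟨A, C, hA, hC, rfl⟩
    exact ((le_sup_left : 𝒜 ≤ 𝒜 ⊔ 𝒞) A hA).inter ((le_sup_right : 𝒞 ≤ 𝒜 ⊔ 𝒞) C hC)

lemma isPiSystem_inter_sets (𝒜 𝒞 : MeasurableSpace Ω) :
    IsPiSystem {u : Set Ω | ∃ A C, MeasurableSet[𝒜] A ∧ MeasurableSet[𝒞] C ∧ u = A ∩ C} := by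
  rintro u ⟨A, C, hA, hC, rfl⟩ v ⟨A', C', hA', hC', rfl⟩ -
  exact ⟨A ∩ A', C ∩ C', hA.inter hA', hC.inter hC', Set.inter_inter_inter_comm A C A' C'⟩

lemma integral_mul_indicator {m0 : MeasurableSpace Ω} {μ : Measure Ω}
    (f : Ω → ℝ) {s : Set Ω} (hs : MeasurableSet[m0] s) :
    ∫ ω, f ω * s.indicator (fun _ => (1:ℝ)) ω ∂μ = ∫ ω in s, f ω ∂μ := by
  rw [← integral_indicator hs]
  refine integral_congr_ae (Eventually.of_forall fun ω => ?_)
  by_cases hω : ω ∈ s <;> simp [hω]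

lemma ind_int {m0 : MeasurableSpace Ω} {μ : Measure Ω} [IsFiniteMeasure μ]
    {s : Set Ω} (hs : MeasurableSet[m0] s) :
    Integrable (s.indicator fun _ => (1:ℝ)) μ := (integrable_const 1).indicator hs

lemma ind_aesm {m0 : MeasurableSpace Ω} {μ : Measure Ω}
    {s : Set Ω} (hs : MeasurableSet[m0] s) :
    AEStronglyMeasurable (s.indicator fun _ => (1:ℝ)) μ :=
  (stronglyMeasurable_const.indicator hs).aestronglyMeasurable

lemma ind_bdd (s : Set Ω) (ω : Ω) : ‖s.indicator (fun _ => (1:ℝ)) ω‖ ≤ 1 := by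
  by_cases hω : ω ∈ s <;> simp [hω]

lemma selfadj {m m0 : MeasurableSpace Ω} {μ : Measure Ω} [IsProbabilityMeasure μ]
    (hm : m ≤ m0) {X : Ω → ℝ} (hX : Integrable X μ)
    {s : Set Ω} (hs : MeasurableSet[m0] s) :
    ∫ ω in s, (μ[X|m]) ω ∂μ
      = ∫ ω, (μ[s.indicator (fun _ => (1:ℝ))|m]) ω * X ω ∂μ := by
  have hsint : Integrable (s.indicator fun _ => (1:ℝ)) μ := ind_int hs
  have hbd : ∀ᵐ ω ∂μ, |(μ[s.indicator (fun _ => (1:ℝ))|m]) ω| ≤ ((1:ℝ≥0) : ℝ) :=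
    ae_bdd_condExp_of_ae_bdd (Eventually.of_forall fun ω => by
      by_cases hω : ω ∈ s <;> simp [hω])
  have hint1 : Integrable (μ[X|m] * s.indicator fun _ => (1:ℝ)) μ := by
    rw [mul_comm]
    exact integrable_condExp.bdd_mul (c := 1) (ind_aesm hs) (Eventually.of_forall (ind_bdd s))
  have hint2 : Integrable (μ[s.indicator (fun _ => (1:ℝ))|m] * X) μ :=
    hX.bdd_mul (c := 1) (stronglyMeasurable_condExp.mono hm).aestronglyMeasurable
      (hbd.mono fun ω h => by simpa [Real.norm_eq_abs] using h)
  calc ∫ ω in s, (μ[X|m]) ω ∂μ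
      = ∫ ω, (μ[X|m]) ω * s.indicator (fun _ => (1:ℝ)) ω ∂μ :=
        (integral_mul_indicator _ hs).symm
    _ = ∫ ω, (μ[(μ[X|m] * s.indicator fun _ => (1:ℝ)) | m]) ω ∂μ :=
        (integral_condExp hm).symm
    _ = ∫ ω, ((μ[X|m]) ω) * (μ[s.indicator (fun _ => (1:ℝ))|m]) ω ∂μ :=
        integral_congr_ae (condExp_mul_of_stronglyMeasurable_left stronglyMeasurable_condExp hint1 hsint)
    _ = ∫ ω, (μ[s.indicator (fun _ => (1:ℝ))|m]) ω * (μ[X|m]) ω ∂μ :=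
        integral_congr_ae (Eventually.of_forall fun ω => mul_comm _ _)
    _ = ∫ ω, (μ[(μ[s.indicator (fun _ => (1:ℝ))|m] * X) | m]) ω ∂μ :=
        (integral_congr_ae
          (condExp_mul_of_stronglyMeasurable_left stronglyMeasurable_condExp hint2 hX)).symm
    _ = ∫ ω, (μ[s.indicator (fun _ => (1:ℝ))|m]) ω * X ω ∂μ := integral_condExp hm

lemma core {𝒜 ℬ 𝒞 m0 : MeasurableSpace Ω} {μ : Measure Ω} [IsProbabilityMeasure μ]
    (h𝒜 : 𝒜 ≤ m0) (hℬ : ℬ ≤ m0) (h𝒞 : 𝒞 ≤ m0)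
    (hind : Indep (𝒜 ⊔ ℬ) 𝒞 μ) {s t : Set Ω}
    (hs : MeasurableSet[𝒜 ⊔ ℬ] s) (ht : MeasurableSet[𝒜 ⊔ 𝒞] t) :
    ∫ ω in t, (μ[s.indicator (fun _ => (1:ℝ))|𝒜]) ω ∂μ = (μ (s ∩ t)).toReal := by
  have hAB : 𝒜 ⊔ ℬ ≤ m0 := sup_le h𝒜 hℬ
  have hAC : 𝒜 ⊔ 𝒞 ≤ m0 := sup_le h𝒜 h𝒞
  have hs0 : MeasurableSet[m0] s := hAB s hs
  set g : Ω → ℝ := μ[s.indicator (fun _ => (1:ℝ))|𝒜] with hg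
  have hgmeasA : Measurable[𝒜] g := stronglyMeasurable_condExp.measurable
  have hgint : Integrable g μ := integrable_condExp
  have hgnn : 0 ≤ᵐ[μ] g :=
    condExp_nonneg (Eventually.of_forall fun ω => Set.indicator_nonneg (fun _ _ => zero_le_one) ω)
  have hsint : Integrable (s.indicator fun _ => (1:ℝ)) μ := ind_int hs0
  have hsetg : ∀ A : Set Ω, MeasurableSet[𝒜] A → ∫ ω in A, g ω ∂μ = (μ (s ∩ A)).toReal := by
    intro A hA
    rw [hg, setIntegral_condExp h𝒜 hsint hA, setIntegral_indicator hs0, setIntegral_const,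
      smul_eq_mul, mul_one, measureReal_def, Set.inter_comm]
  set ν : Measure Ω := μ.withDensity (fun ω => ENNReal.ofReal (g ω)) with hν
  have hνdef : ∀ u : Set Ω, MeasurableSet[m0] u → ν u = ENNReal.ofReal (∫ ω in u, g ω ∂μ) := by
    intro u hu
    rw [hν, withDensity_apply _ hu,
      ← ofReal_integral_eq_lintegral_ofReal hgint.integrableOn (ae_restrict_of_ae hgnn)]
  have key : ∀ u : Set Ω, MeasurableSet[𝒜 ⊔ 𝒞] u → μ (s ∩ u) = ν u := by
    haveI hfinν : IsFiniteMeasure ν :=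
      ⟨by rw [hνdef _ MeasurableSet.univ]; exact ENNReal.ofReal_lt_top⟩
    have htrim : (μ.restrict s).trim hAC = ν.trim hAC := by
      refine MeasureTheory.ext_of_generate_finite _ (sup_eq_generateFrom_inter 𝒜 𝒞)
        (isPiSystem_inter_sets 𝒜 𝒞) ?_ ?_
      · rintro u ⟨A, C, hA, hC, rfl⟩
        have hACu : MeasurableSet[𝒜 ⊔ 𝒞] (A ∩ C) :=
          ((le_sup_left : 𝒜 ≤ 𝒜 ⊔ 𝒞) A hA).inter ((le_sup_right : 𝒞 ≤ 𝒜 ⊔ 𝒞) C hC)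
        have hA0 : MeasurableSet[m0] A := h𝒜 A hA
        have hC0 : MeasurableSet[m0] C := h𝒞 C hC
        rw [trim_measurableSet_eq hAC hACu, trim_measurableSet_eq hAC hACu,
          Measure.restrict_apply (hA0.inter hC0)]
        have hXmeas : Measurable[𝒜 ⊔ ℬ] (A.indicator g) :=
          ((hgmeasA.indicator hA).mono (le_sup_left : 𝒜 ≤ 𝒜 ⊔ ℬ) le_rfl)
        have hYmeas : Measurable[𝒞] (C.indicator fun _ => (1:ℝ)) :=
          measurable_const.indicator hC
        have hIF : IndepFun (A.indicator g) (C.indicator fun _ => (1:ℝ)) μ :=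
          indep_of_indep_of_le_right (indep_of_indep_of_le_left hind hXmeas.comap_le)
            hYmeas.comap_le
        have hint : ∫ ω in A ∩ C, g ω ∂μ = (μ (s ∩ A)).toReal * (μ C).toReal := by
          calc ∫ ω in A ∩ C, g ω ∂μ = ∫ ω in C ∩ A, g ω ∂μ := by rw [Set.inter_comm]
            _ = ∫ ω in C, A.indicator g ω ∂μ := (setIntegral_indicator hA0).symm
            _ = ∫ ω, A.indicator g ω * C.indicator (fun _ => (1:ℝ)) ω ∂μ :=
                (integral_mul_indicator _ hC0).symm
            _ = (∫ ω, A.indicator g ω ∂μ) * ∫ ω, C.indicator (fun _ => (1:ℝ)) ω ∂μ :=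
                hIF.integral_mul_eq_mul_integral (hgint.indicator hA0).aestronglyMeasurable
                  (ind_int hC0).aestronglyMeasurable
            _ = (μ (s ∩ A)).toReal * (μ C).toReal := by
                rw [integral_indicator hA0, hsetg A hA, integral_indicator_const (1:ℝ) hC0,
                  smul_eq_mul, mul_one, measureReal_def]
        have hset : (A ∩ C) ∩ s = (s ∩ A) ∩ C := by
          ext ω
          simp only [Set.mem_inter_iff]
          tauto
        rw [hνdef _ (hA0.inter hC0), hint, hset, ENNReal.ofReal_mul ENNReal.toReal_nonneg,
          ENNReal.ofReal_toReal (measure_ne_top μ _), ENNReal.ofReal_toReal (measure_ne_top μ _)]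
        exact (Indep_iff _ _ _).mp hind (s ∩ A) C
          (hs.inter ((le_sup_left : 𝒜 ≤ 𝒜 ⊔ ℬ) A hA)) hC
      · rw [trim_measurableSet_eq hAC MeasurableSet.univ,
          trim_measurableSet_eq hAC MeasurableSet.univ, Measure.restrict_apply_univ,
          hνdef _ MeasurableSet.univ]
        rw [Measure.restrict_univ, hg, integral_condExp h𝒜, integral_indicator_const (1:ℝ) hs0,
          smul_eq_mul, mul_one, measureReal_def, ENNReal.ofReal_toReal (measure_ne_top μ _)]
    intro u hu
    calc μ (s ∩ u) = μ (u ∩ s) := by rw [Set.inter_comm]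
      _ = μ.restrict s u := (Measure.restrict_apply (hAC u hu)).symm
      _ = (μ.restrict s).trim hAC u := (trim_measurableSet_eq hAC hu).symm
      _ = ν.trim hAC u := by rw [htrim]
      _ = ν u := trim_measurableSet_eq hAC hu
  rw [key t ht, hνdef t (hAC t ht),
    ENNReal.toReal_ofReal (integral_nonneg_of_ae (ae_restrict_of_ae hgnn))]

lemma condexp_ind_eq {𝒜 ℬ 𝒞 M m0 : MeasurableSpace Ω} {μ : Measure Ω} [IsProbabilityMeasure μ]
    (h𝒜 : 𝒜 ≤ m0) (hℬ : ℬ ≤ m0) (h𝒞 : 𝒞 ≤ m0)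
    (h𝒜M : 𝒜 ≤ M) (hM : M ≤ 𝒜 ⊔ 𝒞) (hind : Indep (𝒜 ⊔ ℬ) 𝒞 μ)
    {s : Set Ω} (hs : MeasurableSet[𝒜 ⊔ ℬ] s) :
    μ[s.indicator (fun _ => (1:ℝ))|M] =ᵐ[μ] μ[s.indicator (fun _ => (1:ℝ))|𝒜] := by
  have hAC : 𝒜 ⊔ 𝒞 ≤ m0 := sup_le h𝒜 h𝒞
  have hM0 : M ≤ m0 := hM.trans hAC
  have hs0 : MeasurableSet[m0] s := (sup_le h𝒜 hℬ) s hs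
  refine (ae_eq_condExp_of_forall_setIntegral_eq hM0 (ind_int hs0)
    (fun u _ _ => integrable_condExp.integrableOn) (fun u huM _ => ?_)
    (stronglyMeasurable_condExp.mono h𝒜M).aestronglyMeasurable).symm
  rw [core h𝒜 hℬ h𝒞 hind hs (hM u huM), setIntegral_indicator hs0, setIntegral_const,
    smul_eq_mul, mul_one, measureReal_def, Set.inter_comm s u]

lemma condexp_ind_eq' {𝒜 ℬ 𝒞 M m0 : MeasurableSpace Ω} {μ : Measure Ω} [IsProbabilityMeasure μ]
    (h𝒜 : 𝒜 ≤ m0) (hℬ : ℬ ≤ m0) (h𝒞 : 𝒞 ≤ m0)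
    (h𝒜M : 𝒜 ≤ M) (hM : M ≤ 𝒜 ⊔ 𝒞) (hind : Indep (𝒜 ⊔ 𝒞) ℬ μ)
    {s : Set Ω} (hs : MeasurableSet[𝒜 ⊔ ℬ] s) :
    μ[s.indicator (fun _ => (1:ℝ))|M] =ᵐ[μ] μ[s.indicator (fun _ => (1:ℝ))|𝒜] := by
  have hAC : 𝒜 ⊔ 𝒞 ≤ m0 := sup_le h𝒜 h𝒞
  have hM0 : M ≤ m0 := hM.trans hAC
  have hs0 : MeasurableSet[m0] s := (sup_le h𝒜 hℬ) s hs
  refine (ae_eq_condExp_of_forall_setIntegral_eq hM0 (ind_int hs0)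
    (fun u _ _ => integrable_condExp.integrableOn) (fun u huM _ => ?_)
    (stronglyMeasurable_condExp.mono h𝒜M).aestronglyMeasurable).symm
  have hu0 : MeasurableSet[m0] u := hM0 u huM
  calc ∫ ω in u, (μ[s.indicator (fun _ => (1:ℝ))|𝒜]) ω ∂μ
      = ∫ ω, (μ[u.indicator (fun _ => (1:ℝ))|𝒜]) ω * s.indicator (fun _ => (1:ℝ)) ω ∂μ :=
        selfadj h𝒜 (ind_int hs0) hu0
    _ = ∫ ω in s, (μ[u.indicator (fun _ => (1:ℝ))|𝒜]) ω ∂μ := integral_mul_indicator _ hs0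
    _ = (μ (u ∩ s)).toReal := core h𝒜 h𝒞 hℬ hind (hM u huM) hs
    _ = ∫ ω in u, s.indicator (fun _ => (1:ℝ)) ω ∂μ := by
        rw [setIntegral_indicator hs0, setIntegral_const, smul_eq_mul, mul_one, measureReal_def]

lemma main_step {𝒜 M N m0 : MeasurableSpace Ω} {μ : Measure Ω} [IsProbabilityMeasure μ]
    (hM : M ≤ m0) (hN : N ≤ m0) (h𝒜N : 𝒜 ≤ N) (h𝒜M : 𝒜 ≤ M)
    (hsub : ∀ s : Set Ω, MeasurableSet[N] s →
      μ[s.indicator (fun _ => (1:ℝ))|M] =ᵐ[μ] μ[s.indicator (fun _ => (1:ℝ))|𝒜])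
    {X : Ω → ℝ} (hX : Integrable X μ) :
    μ[μ[X|M]|N] =ᵐ[μ] μ[X|𝒜] := by
  have h𝒜0 : 𝒜 ≤ m0 := h𝒜N.trans hN
  refine (ae_eq_condExp_of_forall_setIntegral_eq hN integrable_condExp
    (fun s _ _ => integrable_condExp.integrableOn) (fun s hsN _ => ?_)
    (stronglyMeasurable_condExp.mono h𝒜N).aestronglyMeasurable).symm
  have hs0 : MeasurableSet[m0] s := hN s hsN
  calc ∫ ω in s, (μ[X|𝒜]) ω ∂μ
      = ∫ ω, (μ[s.indicator (fun _ => (1:ℝ))|𝒜]) ω * X ω ∂μ := selfadj h𝒜0 hX hs0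
    _ = ∫ ω, (μ[s.indicator (fun _ => (1:ℝ))|M]) ω * X ω ∂μ := by
        refine integral_congr_ae ?_
        filter_upwards [hsub s hsN] with ω hω
        rw [hω]
    _ = ∫ ω in s, (μ[X|M]) ω ∂μ := (selfadj hM hX hs0).symm

end Helpers


/-- If the columns `η_m = (ξ_{n,m})_{n∈ℤ}` of a random field `(ξ_{n,m})` are
independent, then the filtration `F_{n,m} = σ(ξ_{i,j} : i ≤ n, j ≤ m)` is
commuting: `E(E(X|F_{a,b})|F_{u,v}) = E(X|F_{a∧u, b∧v})` a.s. -/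
theorem commuting_filtration_of_indep_columns
    {Ω : Type*} {m0 : MeasurableSpace Ω} (μ : Measure Ω) [IsProbabilityMeasure μ]
    (ξ : ℤ → ℤ → Ω → ℝ)
    (hmeas : ∀ n m, Measurable (ξ n m))
    -- the columns (ξ_{·,m}) are (jointly) independent
    (hindep : iIndepFun
      (fun m : ℤ => fun ω => fun n : ℤ => ξ n m ω) μ)
    -- F n m = σ(ξ_{i,j} : i ≤ n, j ≤ m)
    (F : ℤ → ℤ → MeasurableSpace Ω)
    (hF : ∀ n m, F n m =
      ⨆ (i : ℤ) (_ : i ≤ n) (j : ℤ) (_ : j ≤ m),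
        MeasurableSpace.comap (ξ i j) inferInstance) :
    ∀ (X : Ω → ℝ), Integrable X μ →
      ∀ a b u v : ℤ,
        μ[(μ[X | F a b]) | F u v] =ᵐ[μ] μ[X | F (min a u) (min b v)] := by
  intro X hX a b u v
  -- column σ-algebras
  have hcolmeas : ∀ j : ℤ, Measurable (fun ω => fun n : ℤ => ξ n j ω) :=
    fun j => measurable_pi_lambda _ fun n => hmeas n j
  set 𝔠 : ℤ → MeasurableSpace Ω :=
    fun j => MeasurableSpace.comap (fun ω => fun n : ℤ => ξ n j ω) inferInstance with h𝔠
  have h𝔠le : ∀ j, 𝔠 j ≤ m0 := fun j => (hcolmeas j).comap_le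
  have hiind : iIndep 𝔠 μ := (iIndepFun_iff_iIndep _ _ _).mp hindep
  have hcolind : ∀ S T : Set ℤ, Disjoint S T → Indep (⨆ j ∈ S, 𝔠 j) (⨆ j ∈ T, 𝔠 j) μ :=
    fun S T h => indep_iSup_of_disjoint h𝔠le hiind h
  have hξle : ∀ i j : ℤ, MeasurableSpace.comap (ξ i j) inferInstance ≤ 𝔠 j := by
    intro i j
    have heq : ξ i j = (fun p : ℤ → ℝ => p i) ∘ (fun ω => fun n : ℤ => ξ n j ω) := rfl
    rw [heq, ← MeasurableSpace.comap_comp]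
    exact MeasurableSpace.comap_mono (measurable_pi_apply i).comap_le
  have hFcol : ∀ n m : ℤ, F n m ≤ ⨆ j ∈ {j : ℤ | j ≤ m}, 𝔠 j := by
    intro n m; rw [hF]
    refine iSup_le fun i => iSup_le fun hi => iSup_le fun j => iSup_le fun hj => ?_
    exact (hξle i j).trans (le_biSup 𝔠 hj)
  have hFle : ∀ n m : ℤ, F n m ≤ m0 :=
    fun n m => (hFcol n m).trans (iSup_le fun j => iSup_le fun _ => h𝔠le j)
  have hFmono : ∀ {n m n' m' : ℤ}, n ≤ n' → m ≤ m' → F n m ≤ F n' m' := by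
    intro n m n' m' hn hm; rw [hF, hF]
    refine iSup_le fun i => iSup_le fun hi => iSup_le fun j => iSup_le fun hj => ?_
    exact le_iSup_of_le i (le_iSup_of_le (hi.trans hn) (le_iSup_of_le j
      (le_iSup_of_le (hj.trans hm) le_rfl)))
  -- "between columns" σ-algebras
  set D : ℤ → ℤ → ℤ → MeasurableSpace Ω := fun n p q =>
    ⨆ (i : ℤ) (_ : i ≤ n) (j : ℤ) (_ : p < j ∧ j ≤ q),
      MeasurableSpace.comap (ξ i j) inferInstance with hD
  have hDcol : ∀ n p q : ℤ, D n p q ≤ ⨆ j ∈ {j : ℤ | p < j}, 𝔠 j := by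
    intro n p q
    refine iSup_le fun i => iSup_le fun _ => iSup_le fun j => iSup_le fun hj => ?_
    exact (hξle i j).trans (le_biSup 𝔠 hj.1)
  have hDle : ∀ n p q : ℤ, D n p q ≤ m0 :=
    fun n p q => (hDcol n p q).trans (iSup_le fun j => iSup_le fun _ => h𝔠le j)
  have hsplit : ∀ n p q : ℤ, F n q ≤ F n p ⊔ D n p q := by
    intro n p q; rw [hF n q]
    refine iSup_le fun i => iSup_le fun hi => iSup_le fun j => iSup_le fun hj => ?_
    rcases le_or_gt j p with h | h
    · refine le_trans ?_ le_sup_left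
      rw [hF n p]
      exact le_iSup_of_le i (le_iSup_of_le hi (le_iSup_of_le j (le_iSup_of_le h le_rfl)))
    · refine le_trans ?_ le_sup_right
      exact le_iSup_of_le i (le_iSup_of_le hi (le_iSup_of_le j
        (le_iSup_of_le ⟨h, hj⟩ le_rfl)))
  have hdisj : ∀ p : ℤ, Disjoint {j : ℤ | j ≤ p} {j : ℤ | p < j} :=
    fun p => Set.disjoint_left.mpr fun j hj => by
      intro hj'; simp only [Set.mem_setOf_eq] at hj hj'; omega
  rcases le_total a u with hau | hua <;> rcases le_total b v with hbv | hvb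
  · -- a ≤ u, b ≤ v : F a b ≤ F u v
    rw [min_eq_left hau, min_eq_left hbv]
    exact main_step (hFle a b) (hFle u v) (hFmono hau hbv) le_rfl
      (fun s _ => Filter.EventuallyEq.rfl) hX
  · -- a ≤ u, v ≤ b : the mixed case, answer F a v
    rw [min_eq_left hau, min_eq_right hvb]
    have hind : Indep (F a v ⊔ F u v) (D a v b) μ := by
      refine indep_of_indep_of_le_right (indep_of_indep_of_le_left
        (hcolind {j | j ≤ v} {j | v < j} (hdisj v)) ?_) (hDcol a v b)
      exact sup_le (hFcol a v) (hFcol u v)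
    refine main_step (hFle a b) (hFle u v) (hFmono hau le_rfl) (hFmono le_rfl hvb)
      (fun s hs => ?_) hX
    exact condexp_ind_eq (hFle a v) (hFle u v) (hDle a v b) (hFmono le_rfl hvb)
      (hsplit a v b) hind ((le_sup_right : F u v ≤ F a v ⊔ F u v) s hs)
  · -- u ≤ a, b ≤ v : the mixed case, answer F u b
    rw [min_eq_right hua, min_eq_left hbv]
    have hind : Indep (F u b ⊔ F a b) (D u b v) μ := by
      refine indep_of_indep_of_le_right (indep_of_indep_of_le_left
        (hcolind {j | j ≤ b} {j | b < j} (hdisj b)) ?_) (hDcol u b v)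
      exact sup_le (hFcol u b) (hFcol a b)
    refine main_step (hFle a b) (hFle u v) (hFmono le_rfl hbv) (hFmono hua le_rfl)
      (fun s hs => ?_) hX
    exact condexp_ind_eq' (hFle u b) (hDle u b v) (hFle a b) (hFmono hua le_rfl)
      le_sup_right hind (hsplit u b v s hs)
  · -- u ≤ a, v ≤ b : F u v ≤ F a b
    rw [min_eq_right hua, min_eq_right hvb]
    refine main_step (hFle a b) (hFle u v) le_rfl (hFmono hua hvb)
      (fun s hs => ?_) hX
    have hsm : StronglyMeasurable[F u v] (s.indicator fun _ => (1:ℝ)) :=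
      stronglyMeasurable_const.indicator hs
    rw [condExp_of_stronglyMeasurable (hFle a b) (hsm.mono (hFmono hua hvb))
        (ind_int ((hFle u v) s hs)),
      condExp_of_stronglyMeasurable (hFle u v) hsm (ind_int ((hFle u v) s hs))]
end
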